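/- For every nonnegative integer n there exist nonnegative rational constants c_{0,n}, ..., c_{n,n} such that for all nonnegative integers s, r_s(n) = Σ_{i=0}^{n} c_{i,n}·C(s,i), where C(s,i) is the binomial coefficient. -/

import Mathlib

open Finset

/-- `r s n` is the number of representations of `n` as an ordered sum of `s` integer squares. -/
noncomputable def sumOfSquaresRep (s n : ℕ) : ℕ :=
  Set.ncard {x : Fin s → ℤ | ∑ i, x i ^ 2 = (n : ℤ)}

/-- All representations, as a Finset. -/
noncomputable def repS (s n : ℕ) : Finset (Fin s → ℤ) :=
  (Fintype.piFinset fun _ => Finset.Icc (-(n : ℤ)) n).filter fun x => ∑ i, x i ^ 2 = (n : ℤ)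

lemma mem_repS {s n : ℕ} {x : Fin s → ℤ} : x ∈ repS s n ↔ ∑ i, x i ^ 2 = (n : ℤ) := by
  constructor
  · exact fun h => (Finset.mem_filter.1 h).2
  · intro h
    refine Finset.mem_filter.2 ⟨Fintype.mem_piFinset.2 fun i => ?_, h⟩
    have h1 : x i ^ 2 ≤ (n : ℤ) :=
      h ▸ Finset.single_le_sum (fun j _ => sq_nonneg (x j)) (Finset.mem_univ i)
    have h2 : (0 : ℤ) ≤ n := Int.natCast_nonneg n
    have h3 : (n : ℤ) ≤ (n : ℤ) ^ 2 := by
      have := Nat.le_self_pow (two_ne_zero) n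
      exact_mod_cast this
    have := abs_le_of_sq_le_sq' (le_trans h1 h3) h2
    simpa [Finset.mem_Icc] using this

lemma ncard_eq_card_repS (s n : ℕ) :
    sumOfSquaresRep s n = (repS s n).card := by
  rw [sumOfSquaresRep, ← Set.ncard_coe_finset]
  congr 1
  ext x
  simp [mem_repS]

/-- Representations with all coordinates nonzero. -/
noncomputable def good (i n : ℕ) : Finset (Fin i → ℤ) :=
  (repS i n).filter fun x => ∀ j, x j ≠ 0

lemma good_eq_empty {i n : ℕ} (h : n < i) : good i n = ∅ := by
  ext x
  simp only [good, Finset.mem_filter, mem_repS, Finset.notMem_empty, iff_false, not_and]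
  intro hsum hx
  have : (i : ℤ) ≤ ∑ j, x j ^ 2 := by
    calc (i : ℤ) = ∑ _j : Fin i, 1 := by simp
    _ ≤ ∑ j, x j ^ 2 := Finset.sum_le_sum fun j _ => by
        have : 1 ≤ |x j| := Int.one_le_abs (hx j)
        nlinarith [sq_abs (x j)]
  omega

lemma fiber_card (s n : ℕ) (T : Finset (Fin s)) :
    ((repS s n).filter fun x => (Finset.univ.filter fun j => x j ≠ 0) = T).card
      = (good T.card n).card := by
  classical
  set e := T.equivFin with he
  refine Finset.card_bij' (fun x _ => fun k => x (e.symm k))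
    (fun y _ => fun j => if h : j ∈ T then y (e ⟨j, h⟩) else 0) ?_ ?_ ?_ ?_
  · -- maps to good
    intro x hx
    obtain ⟨hxr, hsupp⟩ := Finset.mem_filter.1 hx
    have hsum := mem_repS.1 hxr
    refine Finset.mem_filter.2 ⟨mem_repS.2 ?_, fun k => ?_⟩
    · calc ∑ k, x (↑(e.symm k)) ^ 2 = ∑ j : {a // a ∈ T}, x ↑j ^ 2 :=
            Equiv.sum_comp e.symm (fun j : {a // a ∈ T} => x (↑j) ^ 2)
      _ = ∑ j ∈ T, x j ^ 2 := Finset.sum_coe_sort T (fun j => x j ^ 2)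
      _ = ∑ j, x j ^ 2 := by
          refine Finset.sum_subset (Finset.subset_univ T) fun j _ hj => ?_
          have : j ∉ Finset.univ.filter fun j => x j ≠ 0 := hsupp ▸ hj
          simpa using this
      _ = (n : ℤ) := hsum
    · have hmem : (↑(e.symm k) : Fin s) ∈ T := (e.symm k).2
      have : (e.symm k : Fin s) ∈ Finset.univ.filter fun j => x j ≠ 0 := hsupp ▸ hmem
      simpa using this
  · -- maps back into fiber
    intro y hy
    obtain ⟨hyr, hy0⟩ := Finset.mem_filter.1 hy
    have hsum := mem_repS.1 hyr
    refine Finset.mem_filter.2 ⟨mem_repS.2 ?_, ?_⟩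
    · calc ∑ j, (if h : j ∈ T then y (e ⟨j, h⟩) else 0) ^ 2
          = ∑ j ∈ T, (if h : j ∈ T then y (e ⟨j, h⟩) else 0) ^ 2 := by
            refine (Finset.sum_subset (Finset.subset_univ T) fun j _ hj => by
              simp [hj]).symm
      _ = ∑ j ∈ T.attach, (if h : (↑j : Fin s) ∈ T then y (e ⟨↑j, h⟩) else 0) ^ 2 :=
            (Finset.sum_attach T _).symm
      _ = ∑ j : {a // a ∈ T}, y (e j) ^ 2 := by
            refine Finset.sum_congr rfl fun j _ => ?_
            rw [dif_pos j.2]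
      _ = ∑ k, y k ^ 2 := Equiv.sum_comp e (fun k => y k ^ 2)
      _ = (n : ℤ) := hsum
    · ext j
      simp only [Finset.mem_filter, Finset.mem_univ, true_and]
      constructor
      · intro hj
        by_contra hjT
        simp [hjT] at hj
      · intro hj
        rw [dif_pos hj]
        exact hy0 _
  · -- left inverse
    intro x hx
    obtain ⟨hxr, hsupp⟩ := Finset.mem_filter.1 hx
    funext j
    by_cases hj : j ∈ T
    · simp only [dif_pos hj]
      congr 1
      have : e.symm (e ⟨j, hj⟩) = ⟨j, hj⟩ := e.symm_apply_apply _
      rw [this]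
    · simp only [dif_neg hj]
      have : j ∉ Finset.univ.filter fun j => x j ≠ 0 := hsupp ▸ hj
      have hx0 : ¬ x j ≠ 0 := by simpa using this
      exact (not_not.1 hx0).symm
  · -- right inverse
    intro y hy
    funext k
    have hmem : (↑(e.symm k) : Fin s) ∈ T := (e.symm k).2
    simp only [dif_pos hmem]
    congr 1
    have : (⟨↑(e.symm k), hmem⟩ : {a // a ∈ T}) = e.symm k := Subtype.ext rfl
    rw [this, e.apply_symm_apply]

lemma card_repS (s n : ℕ) :
    (repS s n).card = ∑ i ∈ Finset.range (s + 1), s.choose i * (good i n).card := by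
  classical
  rw [Finset.card_eq_sum_card_fiberwise
    (s := repS s n) (f := fun x => Finset.univ.filter fun j => x j ≠ 0)
    (t := (Finset.univ : Finset (Fin s)).powerset)
    (fun x _ => Finset.mem_powerset.2 (Finset.filter_subset _ _))]
  have := Finset.sum_powerset_apply_card (fun m => (good m n).card)
    (x := (Finset.univ : Finset (Fin s)))
  calc ∑ T ∈ (Finset.univ : Finset (Fin s)).powerset,
        ((repS s n).filter fun x => (Finset.univ.filter fun j => x j ≠ 0) = T).card
      = ∑ T ∈ (Finset.univ : Finset (Fin s)).powerset, (good T.card n).card :=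
        Finset.sum_congr rfl fun T _ => fiber_card s n T
    _ = ∑ i ∈ Finset.range (s + 1), s.choose i * (good i n).card := by
        rw [this]; simp [Finset.card_univ, smul_eq_mul]

theorem stmt_3 (n : ℕ) :
    ∃ c : ℕ → ℚ, (∀ i, i ≤ n → 0 ≤ c i) ∧
      ∀ s : ℕ, (sumOfSquaresRep s n : ℚ) =
        ∑ i ∈ Finset.range (n + 1), c i * (s.choose i) := by
  refine ⟨fun i => ((good i n).card : ℚ), fun i _ => by positivity, fun s => ?_⟩
  rw [ncard_eq_card_repS, card_repS]
  push_cast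
  have key : ∀ M, s ≤ M → n ≤ M →
      (∑ i ∈ Finset.range (M + 1), ((s.choose i : ℚ) * (good i n).card)
        = ∑ i ∈ Finset.range (s + 1), ((s.choose i : ℚ) * (good i n).card))
      ∧ (∑ i ∈ Finset.range (M + 1), ((s.choose i : ℚ) * (good i n).card)
        = ∑ i ∈ Finset.range (n + 1), ((s.choose i : ℚ) * (good i n).card)) := by
    intro M hs hn
    constructor
    · refine (Finset.sum_subset (by intro i hi; simp at hi ⊢; omega) fun i _ hi => ?_).symm
      simp only [Finset.mem_range, not_lt] at hi
      rw [Nat.choose_eq_zero_of_lt (by omega)]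
      simp
    · refine (Finset.sum_subset (by intro i hi; simp at hi ⊢; omega) fun i _ hi => ?_).symm
      simp only [Finset.mem_range, not_lt] at hi
      rw [good_eq_empty (by omega)]
      simp
  obtain ⟨h1, h2⟩ := key (max s n) (le_max_left _ _) (le_max_right _ _)
  rw [← h1, h2]
  exact Finset.sum_congr rfl fun i _ => by ring
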